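/- For n = 2k+1 with k \geq 1, the Taylor expansion of L(p,n) at p = 0 is L(p,n) = p + C(2k+1,k) p^{k+1} + o(p^{k+1}); equivalently, in the polynomial \sum_{i=0}^{k} C(n,i) p^i (1-p)^{n-i}, all coefficients of p^m for 1 \leq m \leq k vanish. -/

import Mathlib

open Polynomial

open Finset

lemma myCoeff_one_sub_X_pow (e j : ℕ) :
    ((1 - X : ℝ[X]) ^ e).coeff j = (-1) ^ j * (e.choose j : ℝ) := by
  have h : (1 - X : ℝ[X]) ^ e = ∑ m ∈ range (e + 1), Polynomial.C ((-1) ^ m * (e.choose m : ℝ)) * X ^ m := by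
    rw [sub_eq_add_neg, add_comm, add_pow]
    refine Finset.sum_congr rfl fun m _ => ?_
    rw [one_pow, mul_one, neg_pow]
    simp [Polynomial.C_mul, Polynomial.C_eq_natCast]
    ring
  rw [h, Polynomial.finset_sum_coeff]
  simp only [Polynomial.coeff_C_mul, Polynomial.coeff_X_pow, mul_ite, mul_one, mul_zero]
  rw [Finset.sum_ite_eq (range (e + 1)) j]
  by_cases hj : j ≤ e
  · simp [Finset.mem_range, Nat.lt_succ_of_le hj]
  · simp [Finset.mem_range, hj, Nat.choose_eq_zero_of_lt (not_le.mp hj)]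

lemma coeffP (k m : ℕ) (hm : m ≤ k) :
    (∑ i ∈ range (k + 1),
        Polynomial.C ((Nat.choose (2 * k + 1) i : ℝ)) * X ^ i
          * (1 - X) ^ (2 * k + 1 - i)).coeff m = if m = 0 then 1 else 0 := by
  set n := 2 * k + 1 with hn
  have hcoeff : ∀ i, (Polynomial.C ((n.choose i : ℝ)) * X ^ i * (1 - X) ^ (n - i)).coeff m
      = if i ≤ m then (n.choose i : ℝ) * ((-1) ^ (m - i) * ((n - i).choose (m - i) : ℝ)) else 0 := by
    intro i
    rw [mul_assoc, Polynomial.coeff_C_mul, Polynomial.coeff_X_pow_mul']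
    rw [myCoeff_one_sub_X_pow]
    split_ifs <;> simp
  rw [Polynomial.finset_sum_coeff]
  simp only [hcoeff]
  rw [← Finset.sum_subset (Finset.range_subset_range.mpr (Nat.succ_le_succ hm))
      (fun i _ hi => if_neg (by simp_all [Finset.mem_range]))]
  have hsum : ∑ i ∈ range (m + 1), (if i ≤ m then (n.choose i : ℝ) * ((-1) ^ (m - i) * ((n - i).choose (m - i) : ℝ)) else 0)
      = (n.choose m : ℝ) * ∑ i ∈ range (m + 1), (-1 : ℝ) ^ (m - i) * (m.choose i : ℝ) := by
    rw [Finset.mul_sum]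
    refine Finset.sum_congr rfl fun i hi => ?_
    rw [Finset.mem_range, Nat.lt_succ_iff] at hi
    rw [if_pos hi]
    have hbin : n.choose i * (n - i).choose (m - i) = n.choose m * m.choose i := by
      have := Nat.choose_mul (k := m) (s := i) (n := n) hi
      omega
    have : (n.choose i : ℝ) * ((n - i).choose (m - i) : ℝ) = (n.choose m : ℝ) * (m.choose i : ℝ) := by
      exact_mod_cast congrArg (Nat.cast : ℕ → ℝ) hbin
    linear_combination ((-1:ℝ))^(m-i) * this
  rw [hsum]
  have halt : ∑ i ∈ range (m + 1), (-1 : ℝ) ^ (m - i) * (m.choose i : ℝ)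
      = if m = 0 then 1 else 0 := by
    rw [← Finset.sum_range_reflect]
    have hc : ∀ i ∈ range (m + 1), (-1 : ℝ) ^ (m - (m + 1 - 1 - i)) * ((m.choose (m + 1 - 1 - i)) : ℝ)
        = (-1 : ℝ) ^ i * (m.choose i : ℝ) := by
      intro i hi
      rw [Finset.mem_range, Nat.lt_succ_iff] at hi
      have h1 : m + 1 - 1 - i = m - i := by omega
      rw [h1, Nat.sub_sub_self hi, Nat.choose_symm hi]
    rw [Finset.sum_congr rfl hc]
    have := Int.alternating_sum_range_choose (n := m)
    have h2 : ((∑ i ∈ range (m + 1), (-1 : ℤ) ^ i * (m.choose i : ℤ) : ℤ) : ℝ)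
        = ∑ i ∈ range (m + 1), (-1 : ℝ) ^ i * (m.choose i : ℝ) := by push_cast; simp [mul_comm]
    rw [← h2, this]
    split_ifs <;> simp
  rw [halt]
  split_ifs with h
  · subst h; simp
  · ring



/-- The expected majority-vote error `L(p, n)` for `n = 2k+1` i.i.d. Bernoulli(p) labels. -/
noncomputable def majErr (k : ℕ) (p : ℝ) : ℝ :=
  ∑ i ∈ Finset.range (k + 1),
      (Nat.choose (2 * k + 1) i : ℝ) * p ^ (i + 1) * (1 - p) ^ (2 * k + 1 - i)
    + ∑ i ∈ Finset.range (k + 1),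
      (Nat.choose (2 * k + 1) i : ℝ) * p ^ (2 * k + 1 - i) * (1 - p) ^ (i + 1)

noncomputable def majPoly (k : ℕ) : ℝ[X] :=
  ∑ i ∈ range (k + 1),
      Polynomial.C ((Nat.choose (2 * k + 1) i : ℝ)) * X ^ (i + 1) * (1 - X) ^ (2 * k + 1 - i)
    + ∑ i ∈ range (k + 1),
      Polynomial.C ((Nat.choose (2 * k + 1) i : ℝ)) * X ^ (2 * k + 1 - i) * (1 - X) ^ (i + 1)

lemma majPoly_eval (k : ℕ) (p : ℝ) : (majPoly k).eval p = majErr k p := by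
  simp [majPoly, majErr, Polynomial.eval_finset_sum]

lemma majPoly_coeff (k m : ℕ) (hk : 1 ≤ k) (hm : m ≤ k + 1) :
    (majPoly k).coeff m =
      (if m = 1 then 1 else 0) + (if m = k + 1 then (Nat.choose (2 * k + 1) k : ℝ) else 0) := by
  have hfirst : (∑ i ∈ range (k + 1),
      Polynomial.C ((Nat.choose (2 * k + 1) i : ℝ)) * X ^ (i + 1) * (1 - X) ^ (2 * k + 1 - i))
      = X ^ 1 * ∑ i ∈ range (k + 1),
      Polynomial.C ((Nat.choose (2 * k + 1) i : ℝ)) * X ^ i * (1 - X) ^ (2 * k + 1 - i) := by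
    rw [Finset.mul_sum]
    exact Finset.sum_congr rfl fun i _ => by ring
  have hsecond : ∀ i ∈ range (k + 1),
      (Polynomial.C ((Nat.choose (2 * k + 1) i : ℝ)) * X ^ (2 * k + 1 - i) * (1 - X) ^ (i + 1)).coeff m
      = if m = k + 1 ∧ i = k then (Nat.choose (2 * k + 1) k : ℝ) else 0 := by
    intro i hi
    rw [Finset.mem_range, Nat.lt_succ_iff] at hi
    rw [mul_assoc, Polynomial.coeff_C_mul, Polynomial.coeff_X_pow_mul']
    by_cases h2 : i = k
    · have e1 : 2 * k + 1 - i = k + 1 := by omega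
      rw [e1]
      by_cases h1 : m = k + 1
      · rw [if_pos (by omega), myCoeff_one_sub_X_pow, if_pos ⟨h1, h2⟩]
        have e2 : m - (k + 1) = 0 := by omega
        rw [e2, h2]
        simp
      · rw [if_neg (by omega : ¬ (k + 1 ≤ m)), if_neg (fun hc => h1 hc.1), mul_zero]
    · have e1 : ¬ (2 * k + 1 - i ≤ m) := by omega
      rw [if_neg e1, if_neg (fun hc => h2 hc.2), mul_zero]
  have hs : (∑ i ∈ range (k + 1),
      Polynomial.C ((Nat.choose (2 * k + 1) i : ℝ)) * X ^ (2 * k + 1 - i) * (1 - X) ^ (i + 1)).coeff m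
      = if m = k + 1 then (Nat.choose (2 * k + 1) k : ℝ) else 0 := by
    rw [Polynomial.finset_sum_coeff, Finset.sum_congr rfl hsecond]
    by_cases h1 : m = k + 1
    · simp only [h1, true_and]
      rw [Finset.sum_ite_eq' (range (k + 1)) k fun _ => (Nat.choose (2 * k + 1) k : ℝ)]
      simp
    · simp [h1]
  rw [majPoly, Polynomial.coeff_add, hfirst, Polynomial.coeff_X_pow_mul', hs]
  congr 1
  by_cases h0 : 1 ≤ m
  · rw [if_pos h0, coeffP k (m - 1) (by omega)]
    split_ifs with ha hb hb <;> first | rfl | omega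
  · rw [if_neg h0, if_neg (by omega)]

/-- For `n = 2k+1`, `k ≥ 1`: `L(p,n) = p + C(2k+1,k) p^{k+1} + o(p^{k+1})` at `p = 0`;
equivalently, in the polynomial `∑_{i=0}^k C(n,i) X^i (1-X)^{n-i}`, the coefficients of
`p^m` vanish for `1 ≤ m ≤ k`. -/
theorem majErr_expansion_at_zero (k : ℕ) (hk : 1 ≤ k) :
    ((fun p : ℝ => majErr k p - (p + (Nat.choose (2 * k + 1) k : ℝ) * p ^ (k + 1)))
        =o[nhds (0 : ℝ)] fun p : ℝ => p ^ (k + 1))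
    ∧ ∀ m : ℕ, 1 ≤ m → m ≤ k →
        (∑ i ∈ Finset.range (k + 1),
          Polynomial.C ((Nat.choose (2 * k + 1) i : ℝ)) * Polynomial.X ^ i
            * (1 - Polynomial.X) ^ (2 * k + 1 - i)).coeff m = 0 := by
  constructor
  · obtain ⟨S, hS⟩ : (X : ℝ[X]) ^ (k + 2) ∣
        (majPoly k - (X + Polynomial.C ((Nat.choose (2 * k + 1) k : ℝ)) * X ^ (k + 1))) := by
      rw [Polynomial.X_pow_dvd_iff]
      intro m hm
      rw [Polynomial.coeff_sub, Polynomial.coeff_add, majPoly_coeff k m hk (by omega),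
        Polynomial.coeff_X, Polynomial.coeff_C_mul, Polynomial.coeff_X_pow]
      split_ifs <;> first | (exfalso; omega) | ring
    have hf : (fun p : ℝ => majErr k p - (p + (Nat.choose (2 * k + 1) k : ℝ) * p ^ (k + 1)))
        = fun p : ℝ => p ^ (k + 1) * (p * S.eval p) := by
      funext p
      calc majErr k p - (p + (Nat.choose (2 * k + 1) k : ℝ) * p ^ (k + 1))
          = Polynomial.eval p (majPoly k - (X + Polynomial.C ((Nat.choose (2 * k + 1) k : ℝ)) * X ^ (k + 1))) := by
            simp [majPoly_eval]
        _ = p ^ (k + 2) * S.eval p := by rw [hS]; simp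
        _ = p ^ (k + 1) * (p * S.eval p) := by ring
    rw [hf]
    have h1 : (fun p : ℝ => p ^ (k + 1)) =O[nhds (0:ℝ)] fun p : ℝ => p ^ (k + 1) :=
      Asymptotics.isBigO_refl _ _
    have h2 : (fun p : ℝ => p * S.eval p) =o[nhds (0:ℝ)] (fun _ => (1 : ℝ)) := by
      rw [Asymptotics.isLittleO_one_iff]
      have hc : Continuous fun p : ℝ => p * S.eval p := continuous_id.mul S.continuous
      simpa using hc.tendsto 0
    simpa using h1.mul_isLittleO h2
  · intro m h1 h2
    rw [coeffP k m h2, if_neg (by omega)]
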